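/- arXiv:1607.03064 — 6 statements merged into one kernel-verified Lean document; each statement's English description precedes it below -/
import Mathlib

section
/- Let c be a complex number with |c| ≥ 2, and define the sequence u by u₀ = 1, u₁ = 2c+1, u_{m+2} = (2c+2)u_{m+1} − u_m. Then for all m ≥ 0, (2|c|−3)^m ≤ |u_m| ≤ (2|c|+3)^m. -/
/-- For `c : ℂ` with `|c| ≥ 2` and the sequence `u₀ = 1`, `u₁ = 2c+1`,
`u_{m+2} = (2c+2)u_{m+1} − u_m`, we have `(2|c|−3)^m ≤ |u_m| ≤ (2|c|+3)^m`. -/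
theorem stmt_0 (c : ℂ) (hc : 2 ≤ ‖c‖) (u : ℕ → ℂ)
    (h0 : u 0 = 1) (h1 : u 1 = 2 * c + 1)
    (hrec : ∀ m, u (m + 2) = (2 * c + 2) * u (m + 1) - u m) :
    ∀ m : ℕ, (2 * ‖c‖ - 3) ^ m ≤ ‖u m‖ ∧
      ‖u m‖ ≤ (2 * ‖c‖ + 3) ^ m := by
  set a := ‖c‖ with ha
  have ha1 : (1 : ℝ) ≤ 2 * a - 3 := by linarith
  have hratio : ∀ m, (2 * a - 3) * ‖u m‖ ≤ ‖u (m + 1)‖ ∧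
      ‖u (m + 1)‖ ≤ (2 * a + 3) * ‖u m‖ := by
    intro m
    induction m with
    | zero =>
      rw [h0, h1, norm_one, mul_one, mul_one]
      have hlo : 2 * a - 1 ≤ ‖2 * c + 1‖ := by
        have := norm_sub_norm_le (2 * c) (-1)
        simpa [norm_mul, Complex.norm_two, sub_neg_eq_add] using this
      have hhi : ‖2 * c + 1‖ ≤ 2 * a + 1 := by
        have := norm_add_le (2 * c) 1
        simpa [norm_mul, Complex.norm_two] using this
      constructor <;> linarith
    | succ n ih =>
      obtain ⟨ilo, ihi⟩ := ih
      have hnn : (0:ℝ) ≤ ‖u n‖ := norm_nonneg _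
      have hmono : ‖u n‖ ≤ ‖u (n + 1)‖ := by nlinarith
      have hrec' := hrec n
      have hlo : (2 * a - 2) * ‖u (n + 1)‖ - ‖u n‖
          ≤ ‖u (n + 2)‖ := by
        have h2 : 2 * a - 2 ≤ ‖2 * c + 2‖ := by
          have := norm_sub_norm_le (2 * c) (-2)
          simpa [norm_mul, Complex.norm_two, sub_neg_eq_add] using this
        have h3 := norm_sub_norm_le ((2 * c + 2) * u (n + 1)) (u n)
        rw [norm_mul] at h3
        have hnn1 : (0:ℝ) ≤ ‖u (n+1)‖ := norm_nonneg _
        rw [hrec']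
        nlinarith
      have hhi : ‖u (n + 2)‖ ≤
          (2 * a + 2) * ‖u (n + 1)‖ + ‖u n‖ := by
        have h2 : ‖2 * c + 2‖ ≤ 2 * a + 2 := by
          have := norm_add_le (2 * c) 2
          simpa [norm_mul, Complex.norm_two] using this
        have h3 := norm_sub_le ((2 * c + 2) * u (n + 1)) (u n)
        rw [norm_mul] at h3
        have hnn1 : (0:ℝ) ≤ ‖u (n+1)‖ := norm_nonneg _
        rw [hrec']
        nlinarith
      constructor <;> nlinarith
  intro m
  induction m with
  | zero => simp [h0]
  | succ n ih =>
    obtain ⟨ilo, ihi⟩ := ih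
    obtain ⟨rlo, rhi⟩ := hratio n
    have hp1 : (0:ℝ) ≤ (2 * a - 3) ^ n := by positivity
    constructor
    · calc (2 * a - 3) ^ (n + 1) = (2 * a - 3) * (2 * a - 3) ^ n := by ring
        _ ≤ (2 * a - 3) * ‖u n‖ := by nlinarith
        _ ≤ _ := rlo
    · calc ‖u (n + 1)‖ ≤ (2 * a + 3) * ‖u n‖ := rhi
        _ ≤ (2 * a + 3) * (2 * a + 3) ^ n := by nlinarith
        _ = (2 * a + 3) ^ (n + 1) := by ring
end

section
/- Let c be a complex number with |c| ≥ 2, and define the sequence u by u₀ = 1, u₁ = 2c+1, u_{m+2} = (2c+2)u_{m+1} − u_m. Then the sequence of absolute values |u_m| is monotonically nondecreasing, and moreover |u_{m+1}| ≥ (2|c|−3)|u_m| for all m ≥ 0. -/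
/-- For `c : ℂ` with `|c| ≥ 2` and the sequence `u₀ = 1`, `u₁ = 2c+1`,
`u_{m+2} = (2c+2)u_{m+1} − u_m`, the sequence `|u_m|` is monotonically
nondecreasing and `|u_{m+1}| ≥ (2|c|−3)|u_m|` for all `m ≥ 0`. -/
theorem stmt_1 (c : ℂ) (hc : 2 ≤ ‖c‖) (u : ℕ → ℂ)
    (h0 : u 0 = 1) (h1 : u 1 = 2 * c + 1)
    (hrec : ∀ m, u (m + 2) = (2 * c + 2) * u (m + 1) - u m) :
    Monotone (fun m => ‖u m‖) ∧
      ∀ m : ℕ, (2 * ‖c‖ - 3) * ‖u m‖ ≤ ‖u (m + 1)‖ := by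
  have habs : (1:ℝ) ≤ 2 * ‖c‖ - 3 := by linarith
  have key : ∀ m, (2 * ‖c‖ - 3) * ‖u m‖ ≤ ‖u (m + 1)‖ := by
    intro m
    induction m with
    | zero =>
      rw [h0, h1]
      have h2 : ‖2 * c + 1‖ - ‖(1 : ℂ)‖ ≤ ‖2 * c‖ := by
        simpa using norm_sub_norm_le (2 * c + 1) (1 : ℂ)
      have h2' : ‖2 * c‖ - ‖(1 : ℂ)‖ ≤ ‖2 * c + 1‖ := by
        have := norm_sub_norm_le (2 * c) (-1 : ℂ)
        simp only [norm_neg, sub_neg_eq_add] at this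
        simpa using this
      simp only [norm_mul, Complex.norm_ofNat, norm_one] at h2' ⊢
      nlinarith
    | succ n ih =>
      have hn : ‖u n‖ ≤ ‖u (n + 1)‖ := by
        have := norm_nonneg (u n)
        nlinarith
      have h2 : ‖2 * c + 2‖ ≥ 2 * ‖c‖ - 2 := by
        have := norm_sub_norm_le (2 * c) (-2 : ℂ)
        simp only [norm_neg, sub_neg_eq_add, norm_mul, Complex.norm_ofNat] at this
        linarith
      have h3 : ‖(2 * c + 2) * u (n + 1)‖ - ‖u n‖
          ≤ ‖u (n + 2)‖ := by
        rw [hrec n]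
        exact norm_sub_norm_le _ _
      rw [norm_mul] at h3
      have h4 := norm_nonneg (u (n + 1))
      nlinarith
  refine ⟨monotone_nat_of_le_succ fun n => ?_, key⟩
  have := norm_nonneg (u n)
  have := key n
  nlinarith
end

section
/- Let R be a commutative ring, c ∈ R, ε ∈ R, and define u' by u'₀ = ε, u'₁ = ε(2c−1), u'_{n+2} = (2c−2)u'_{n+1} − u'_n. Then for every n ≥ 0, u'_n ≡ (−1)^n·ε·(1 − n(n+1)·c) (mod 4c²), where n(n+1) denotes the integer n(n+1) cast into R. -/
/-- In a commutative ring `R`, with `u'₀ = ε`, `u'₁ = ε(2c−1)`,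
`u'_{n+2} = (2c−2)u'_{n+1} − u'_n`, one has
`u'_n ≡ (−1)^n ε (1 − n(n+1)c) (mod 4c²)`. -/
theorem stmt_3 (R : Type*) [CommRing R] (c ε : R) (u' : ℕ → R)
    (h0 : u' 0 = ε) (h1 : u' 1 = ε * (2 * c - 1))
    (hrec : ∀ n, u' (n + 2) = (2 * c - 2) * u' (n + 1) - u' n) :
    ∀ n : ℕ, (4 * c ^ 2) ∣ (u' n - (-1) ^ n * ε * (1 - (n * (n + 1) : ℕ) * c)) := by
  have key : ∀ n : ℕ,
      (4 * c ^ 2) ∣ (u' n - (-1) ^ n * ε * (1 - (n * (n + 1) : ℕ) * c)) ∧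
      (4 * c ^ 2) ∣ (u' (n + 1) - (-1) ^ (n + 1) * ε * (1 - ((n + 1) * (n + 2) : ℕ) * c)) := by
    intro n
    induction n with
    | zero =>
      constructor
      · refine ⟨0, ?_⟩; rw [h0]; push_cast; ring
      · refine ⟨0, ?_⟩; rw [h1]; push_cast; ring
    | succ n ih =>
      obtain ⟨⟨a, ha⟩, ⟨b, hb⟩⟩ := ih
      refine ⟨⟨b, hb⟩, ?_⟩
      have hun : u' n = (-1) ^ n * ε * (1 - (n * (n + 1) : ℕ) * c) + 4 * c ^ 2 * a := by
        linear_combination ha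
      have hun1 : u' (n + 1) = (-1) ^ (n + 1) * ε * (1 - ((n + 1) * (n + 2) : ℕ) * c)
          + 4 * c ^ 2 * b := by linear_combination hb
      obtain ⟨k, hk⟩ : Even ((n + 1) * (n + 2)) := Nat.even_mul_succ_self (n + 1)
      have hk2 : ((n : R) + 1) * ((n : R) + 2) = 2 * (k : R) := by
        have := congrArg (fun m : ℕ => (m : R)) hk
        push_cast at this; linear_combination this
      refine ⟨(2 * c - 2) * b - a + (-1) ^ n * ε * k, ?_⟩
      have h2 : n + 1 + 1 = n + 2 := rfl
      rw [h2, hrec n, hun, hun1]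
      push_cast
      linear_combination (2 * c ^ 2 * ε * (-1) ^ n) * hk2
  exact fun n => (key n).1
end

section
/- Let R be the ring of integers of an imaginary quadratic field and c ∈ R with c ∉ {0, ±2}. If (u,v) ∈ R² satisfies (u + 2v)(u − 2(c+1)v)(u + 2(c−1)v) = ε for a unit ε of R, then v = 0 and u is a unit of R. -/
open NumberField

/-- In the ring of integers of an imaginary quadratic field, if `c ∉ {0, ±2}` and
`(u + 2v)(u − 2(c+1)v)(u + 2(c−1)v)` is a unit `ε`, then `v = 0` and `u` is a unit. -/
theorem stmt_5 (K : Type*) [Field K] [NumberField K]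
    (hdeg : Module.finrank ℚ K = 2) (himag : IsEmpty (K →+* ℝ))
    (c : 𝓞 K) (hc0 : c ≠ 0) (hc2 : c ≠ 2) (hc2' : c ≠ -2)
    (u v : 𝓞 K) (ε : (𝓞 K)ˣ)
    (h : (u + 2 * v) * (u - 2 * (c + 1) * v) * (u + 2 * (c - 1) * v) = (ε : 𝓞 K)) :
    v = 0 ∧ IsUnit u := by
  -- every infinite place is complex
  have hcompl : ∀ w : InfinitePlace K, ¬ w.IsReal := fun w hw =>
    himag.false (NumberField.InfinitePlace.embedding_of_isReal hw)
  have hmult : ∀ w : InfinitePlace K, w.mult = 2 := fun w => by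
    simp [NumberField.InfinitePlace.mult, hcompl w]
  -- there is exactly one infinite place
  have hcard : Fintype.card (InfinitePlace K) = 1 := by
    have := NumberField.InfinitePlace.sum_mult_eq (K := K)
    rw [hdeg] at this
    simp only [hmult, Finset.sum_const, smul_eq_mul, Finset.card_univ] at this
    omega
  obtain ⟨w, hw⟩ := Fintype.card_eq_one_iff.mp hcard
  have huniv : (Finset.univ : Finset (InfinitePlace K)) = {w} := by
    ext w'; simp [hw w']
  -- product formula collapses to `w x ^ 2 = |Norm x|`
  have key : ∀ x : K, w x ^ 2 = ((|Algebra.norm ℚ x| : ℚ) : ℝ) := fun x => by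
    have := NumberField.InfinitePlace.prod_eq_abs_norm (K := K) x
    rwa [huniv, Finset.prod_singleton, hmult w] at this
  -- units have absolute value 1 at `w`
  have hunit1 : ∀ x : 𝓞 K, IsUnit x → w (x : K) = 1 := by
    intro x hx
    have h1 : |Algebra.norm ℚ (x : K)| = 1 := by
      have := NumberField.isUnit_iff_norm.mp hx
      rwa [RingOfIntegers.coe_norm] at this
    have h2 : w (x : K) ^ 2 = 1 := by rw [key, h1]; norm_num
    have h3 : (0 : ℝ) ≤ w (x : K) := apply_nonneg w _
    nlinarith
  -- the three factors are units
  have hεu : IsUnit ((ε : 𝓞 K)) := ε.isUnit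
  rw [← h] at hεu
  have hb : IsUnit (u - 2 * (c + 1) * v) :=
    isUnit_of_mul_isUnit_right (isUnit_of_mul_isUnit_left hεu)
  have hd : IsUnit (u + 2 * (c - 1) * v) := isUnit_of_mul_isUnit_right hεu
  -- 4cv = (third factor) - (second factor), so w(4cv) ≤ 2
  have hdiff : (4 * c * v : 𝓞 K) = (u + 2 * (c - 1) * v) - (u - 2 * (c + 1) * v) := by ring
  have hle : w ((4 * c * v : 𝓞 K) : K) ≤ 2 := by
    have h1 := hunit1 _ hd
    have h2 := hunit1 _ hb
    calc w ((4 * c * v : 𝓞 K) : K)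
        = w (((u + 2 * (c - 1) * v : 𝓞 K) : K) - ((u - 2 * (c + 1) * v : 𝓞 K) : K)) := by
          rw [hdiff]; push_cast; ring_nf
      _ ≤ w ((u + 2 * (c - 1) * v : 𝓞 K) : K) + w ((u - 2 * (c + 1) * v : 𝓞 K) : K) :=
          AbsoluteValue.sub_le_add w.1 _ _
      _ ≤ 2 := by rw [h1, h2]; norm_num
  -- hence |Norm(4cv)| ≤ 4, but Norm(4) = 16
  have hnorm4 : |Algebra.norm ℚ (((4 * c * v : 𝓞 K)) : K)| ≤ 4 := by
    have hk := key ((4 * c * v : 𝓞 K) : K)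
    have h0 : (0 : ℝ) ≤ w ((4 * c * v : 𝓞 K) : K) := apply_nonneg w _
    have : ((|Algebra.norm ℚ (((4 * c * v : 𝓞 K)) : K)| : ℚ) : ℝ) ≤ ((4 : ℚ) : ℝ) := by
      rw [← hk, show ((4:ℚ):ℝ) = 4 by norm_num]; nlinarith
    exact_mod_cast this
  have hsplit : (((4 * c * v : 𝓞 K)) : K) = (algebraMap ℚ K 4) * ((c * v : 𝓞 K) : K) := by
    simp only [map_mul, map_ofNat]; ring
  have hN4 : Algebra.norm ℚ (algebraMap ℚ K (4 : ℚ)) = 16 := by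
    rw [Algebra.norm_algebraMap, hdeg]; norm_num
  rw [hsplit, map_mul, hN4, abs_mul, abs_of_nonneg (by norm_num : (0:ℚ) ≤ 16)] at hnorm4
  -- the norm of cv is an integer of absolute value < 1, hence 0, hence cv = 0
  have hint : ((Algebra.norm ℤ (c * v) : ℤ) : ℚ) = Algebra.norm ℚ (((c * v : 𝓞 K)) : K) :=
    Algebra.coe_norm_int _
  have hz : Algebra.norm ℤ (c * v) = 0 := by
    by_contra hne
    have h1 : (1 : ℚ) ≤ |((Algebra.norm ℤ (c * v) : ℤ) : ℚ)| := by
      rw [← Int.cast_abs]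
      exact_mod_cast Int.one_le_abs hne
    rw [hint] at h1
    linarith
  have hcvK : ((c * v : 𝓞 K) : K) = 0 :=
    Algebra.norm_eq_zero_iff.mp (by rw [← hint, hz, Int.cast_zero])
  have hcv : c * v = 0 := by exact_mod_cast hcvK
  have hv : v = 0 := by
    rcases mul_eq_zero.mp hcv with h' | h'
    · exact absurd h' hc0
    · exact h'
  refine ⟨hv, ?_⟩
  subst hv
  simp only [mul_zero, add_zero, sub_zero] at h
  exact isUnit_of_mul_isUnit_left (isUnit_of_mul_isUnit_left (h ▸ ε.isUnit))
end

section
/- Let R be the ring of integers of an imaginary quadratic field and c ∈ R. If c² − 4 = r² for some r ∈ R, then c ∈ {0, 1, −1, 2, −2}. -/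
open NumberField Complex

/-- In the ring of integers of an imaginary quadratic field, if `c² − 4 = r²`,
then `c ∈ {0, ±1, ±2}`. -/
theorem stmt_10 (K : Type*) [Field K] [NumberField K]
    (hdeg : Module.finrank ℚ K = 2) (himag : IsEmpty (K →+* ℝ))
    (c r : 𝓞 K) (h : c ^ 2 - 4 = r ^ 2) :
    c = 0 ∨ c = 1 ∨ c = -1 ∨ c = 2 ∨ c = -2 := by
  classical
  have hcard : Fintype.card (K →ₐ[ℚ] ℂ) = 2 := by
    rw [AlgHom.card]; exact hdeg
  obtain ⟨ψ⟩ : Nonempty (K →ₐ[ℚ] ℂ) :=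
    Fintype.card_pos_iff.mp (by rw [hcard]; norm_num)
  set ψ' : K →ₐ[ℚ] ℂ := ((starRingEnd ℂ).toRatAlgHom.comp ψ) with hψ'def
  have hψ'app : ∀ x : K, ψ' x = (starRingEnd ℂ) (ψ x) := fun x => rfl
  have hne : ψ ≠ ψ' := by
    intro heq
    have him : ∀ x : K, (ψ x).im = 0 := by
      intro x
      have h1 : (starRingEnd ℂ) (ψ x) = ψ x := by
        rw [← hψ'app, ← heq]
      rw [Complex.conj_eq_iff_im] at h1
      exact h1
    exact himag.elim
      { toFun := fun x => (ψ x).re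
        map_one' := by simp
        map_mul' := fun x y => by
          have h1 := him x; have h2 := him y
          simp [map_mul, Complex.mul_re, h1, h2]
        map_zero' := by simp
        map_add' := fun x y => by simp [map_add] }
  have huniv : (Finset.univ : Finset (K →ₐ[ℚ] ℂ)) = {ψ, ψ'} := by
    symm
    apply Finset.eq_of_subset_of_card_le (Finset.subset_univ _)
    rw [Finset.card_univ, hcard, Finset.card_insert_of_notMem (by simpa using hne),
      Finset.card_singleton]
  have key : ∀ x : 𝓞 K, ∃ T N : ℤ,
      ((T : ℂ) = ψ (x : K) + (starRingEnd ℂ) (ψ (x : K))) ∧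
      ((N : ℂ) = ψ (x : K) * (starRingEnd ℂ) (ψ (x : K))) := by
    intro x
    have hx : IsIntegral ℤ (x : K) := x.isIntegral_coe
    obtain ⟨T, hT⟩ := IsIntegrallyClosed.isIntegral_iff.mp
      (Algebra.isIntegral_trace (L := ℚ) hx)
    obtain ⟨N, hN⟩ := IsIntegrallyClosed.isIntegral_iff.mp
      (Algebra.isIntegral_norm (R := ℤ) ℚ hx)
    refine ⟨T, N, ?_, ?_⟩
    · have h1 : algebraMap ℚ ℂ (Algebra.trace ℚ K (x : K)) = ∑ σ : K →ₐ[ℚ] ℂ, σ (x : K) :=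
        trace_eq_sum_embeddings ℂ
      rw [huniv, Finset.sum_pair hne, hψ'app, ← hT] at h1
      rw [eq_intCast, map_intCast] at h1
      exact h1
    · have h1 : algebraMap ℚ ℂ (Algebra.norm ℚ (x : K)) = ∏ σ : K →ₐ[ℚ] ℂ, σ (x : K) :=
        Algebra.norm_eq_prod_embeddings ℚ ℂ (x : K)
      rw [huniv, Finset.prod_pair hne, hψ'app, ← hN] at h1
      rw [eq_intCast, map_intCast] at h1
      exact h1
  obtain ⟨tc, nc, htc, hnc⟩ := key c
  obtain ⟨tr, nr, htr, hnr⟩ := key r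
  obtain ⟨ta, na, -, hna⟩ := key (c - r)
  obtain ⟨tb, nb, -, hnb⟩ := key (c + r)
  set z := ψ (c : K) with hz
  set w := ψ (r : K) with hw
  have hsub : ψ ((c - r : 𝓞 K) : K) = z - w := by
    rw [show ((c - r : 𝓞 K) : K) = (c : K) - (r : K) by push_cast; ring, map_sub]
  have hadd : ψ ((c + r : 𝓞 K) : K) = z + w := by
    rw [show ((c + r : 𝓞 K) : K) = (c : K) + (r : K) by push_cast; ring, map_add]
  rw [hsub, map_sub] at hna
  rw [hadd, map_add] at hnb
  have hK : ((c : K)) ^ 2 - 4 = ((r : K)) ^ 2 := by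
    have h2 := congrArg (algebraMap (𝓞 K) K) h
    simpa [map_sub, map_pow, map_ofNat] using h2
  have hzw : z ^ 2 - 4 = w ^ 2 := by
    have h1 := congrArg ψ hK
    simpa [map_sub, map_pow, map_ofNat] using h1
  have hconj : (starRingEnd ℂ) z ^ 2 - 4 = (starRingEnd ℂ) w ^ 2 := by
    have h1 := congrArg (starRingEnd ℂ) hzw
    simpa [map_sub, map_pow, map_ofNat] using h1
  -- integer identities
  have cast_inj : ∀ m n : ℤ, ((m : ℂ) = (n : ℂ)) → m = n := fun m n hmn => by exact_mod_cast hmn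
  have E1 : na + nb = 2 * nc + 2 * nr := by
    apply cast_inj; push_cast
    linear_combination hna + hnb - 2 * hnc - 2 * hnr
  have E2 : na * nb = 16 := by
    apply cast_inj; push_cast
    linear_combination nb * hna + ((z - w) * ((starRingEnd ℂ) z - (starRingEnd ℂ) w)) * hnb +
      ((starRingEnd ℂ) z ^ 2 - (starRingEnd ℂ) w ^ 2) * hzw + 4 * hconj
  have E3 : tc ^ 2 - 2 * nc = tr ^ 2 - 2 * nr + 8 := by
    apply cast_inj; push_cast
    linear_combination (tc + z + (starRingEnd ℂ) z) * htc - 2 * hnc -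
      ((tr : ℂ) + w + (starRingEnd ℂ) w) * htr + 2 * hnr + hzw + hconj
  have E4 : nc ^ 2 = nr ^ 2 + 4 * tr ^ 2 - 8 * nr + 16 := by
    apply cast_inj; push_cast
    linear_combination ((nc : ℂ) + z * (starRingEnd ℂ) z) * hnc -
      ((nr : ℂ) + w * (starRingEnd ℂ) w) * hnr -
      4 * ((tr : ℂ) + w + (starRingEnd ℂ) w) * htr + 8 * hnr +
      ((starRingEnd ℂ) z ^ 2) * hzw + (w ^ 2 + 4) * hconj
  -- real facts
  have htcR : (tc : ℝ) = 2 * z.re := by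
    have h1 : (tc : ℂ) = ((2 * z.re : ℝ) : ℂ) := by rw [htc]; exact Complex.add_conj z
    exact_mod_cast h1
  have hncR : (nc : ℝ) = Complex.normSq z := by
    have h1 : (nc : ℂ) = ((Complex.normSq z : ℝ) : ℂ) := by rw [hnc, Complex.mul_conj]
    exact_mod_cast h1
  have hnrR : (nr : ℝ) = Complex.normSq w := by
    have h1 : (nr : ℂ) = ((Complex.normSq w : ℝ) : ℂ) := by rw [hnr, Complex.mul_conj]
    exact_mod_cast h1
  have hnaR : (na : ℝ) = Complex.normSq (z - w) := by
    have h1 : (na : ℂ) = ((Complex.normSq (z - w) : ℝ) : ℂ) := by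
      rw [hna, show (starRingEnd ℂ) z - (starRingEnd ℂ) w = (starRingEnd ℂ) (z - w) from (map_sub _ _ _).symm, Complex.mul_conj]
    exact_mod_cast h1
  have hnbR : (nb : ℝ) = Complex.normSq (z + w) := by
    have h1 : (nb : ℂ) = ((Complex.normSq (z + w) : ℝ) : ℂ) := by
      rw [hnb, show (starRingEnd ℂ) z + (starRingEnd ℂ) w = (starRingEnd ℂ) (z + w) from (map_add _ _ _).symm, Complex.mul_conj]
    exact_mod_cast h1
  have hnc0 : (0 : ℤ) ≤ nc := by exact_mod_cast hncR ▸ Complex.normSq_nonneg z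
  have hnr0 : (0 : ℤ) ≤ nr := by exact_mod_cast hnrR ▸ Complex.normSq_nonneg w
  have hna0 : (0 : ℤ) ≤ na := by exact_mod_cast hnaR ▸ Complex.normSq_nonneg (z - w)
  have hnb0 : (0 : ℤ) ≤ nb := by exact_mod_cast hnbR ▸ Complex.normSq_nonneg (z + w)
  -- divisor analysis
  have hna1 : 1 ≤ na := by
    rcases lt_or_eq_of_le hna0 with h1 | h1
    · omega
    · exfalso; rw [← h1] at E2; simp at E2
  have hnb1 : 1 ≤ nb := by
    rcases lt_or_eq_of_le hnb0 with h1 | h1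
    · omega
    · exfalso; rw [← h1] at E2; simp at E2
  have hna16 : na ≤ 16 := by nlinarith
  have hs : nc + nr = 4 ∨ nc + nr = 5 := by
    interval_cases na <;> omega
  rcases hs with hs | hs
  swap
  · -- nc + nr = 5 : impossible
    exfalso
    have h5 : 2 * nc = 1 + 4 * (tr * tr) := by
      linear_combination E4 - (nc - nr) * hs - 3 * hs
    obtain ⟨u, hu⟩ : ∃ u : ℤ, u = tr * tr := ⟨_, rfl⟩
    rw [← hu] at h5
    omega
  · have h40 : 4 * tr ^ 2 = 0 := by
      linear_combination (nc - nr) * hs + 4 * hs - E4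
    have htr0 : tr = 0 := by
      have h1 : tr ^ 2 = 0 := by linarith
      exact sq_eq_zero_iff.mp h1
    have htc4 : tc ^ 2 = 4 * nc := by
      linear_combination E3 - 2 * hs + tr * htr0
    -- z is real
    have hreal : (2 * z.re) ^ 2 = 4 * (z.re * z.re + z.im * z.im) := by
      have h1 : ((tc ^ 2 : ℤ) : ℝ) = ((4 * nc : ℤ) : ℝ) := by exact_mod_cast htc4
      push_cast at h1
      rw [htcR, hncR, Complex.normSq_apply] at h1
      linarith
    have him0 : z.im = 0 := by
      have h1 : z.im * z.im = 0 := by linear_combination (-1/4 : ℝ) * hreal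
      exact mul_self_eq_zero.mp h1
    have hnc4 : nc ≤ 4 := by omega
    obtain ⟨m, hm5, hm⟩ : ∃ m : ℤ, (m = 0 ∨ m = 1 ∨ m = -1 ∨ m = 2 ∨ m = -2) ∧ tc = 2 * m := by
      have hsq : tc ^ 2 ≤ 4 ^ 2 := by rw [htc4]; omega
      obtain ⟨h1, h2⟩ := abs_le_of_sq_le_sq' hsq (by norm_num)
      interval_cases tc
      · exact ⟨-2, by norm_num, by norm_num⟩
      · exfalso; norm_num at htc4; omega
      · exact ⟨-1, by norm_num, by norm_num⟩
      · exfalso; norm_num at htc4; omega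
      · exact ⟨0, by norm_num, by norm_num⟩
      · exfalso; norm_num at htc4; omega
      · exact ⟨1, by norm_num, by norm_num⟩
      · exfalso; norm_num at htc4; omega
      · exact ⟨2, by norm_num, by norm_num⟩
    have hzm : z = ((m : ℤ) : ℂ) := by
      apply Complex.ext
      · have h1 : (tc : ℝ) = 2 * z.re := htcR
        rw [hm] at h1
        push_cast at h1 ⊢
        simp only [Complex.intCast_re]
        linarith
      · simp [him0]
    have hcK : (c : K) = ((m : 𝓞 K) : K) := by
      apply ψ.toRingHom.injective
      have h1 : ((m : 𝓞 K) : K) = ((m : ℤ) : K) := map_intCast (algebraMap (𝓞 K) K) m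
      rw [h1]
      simp only [AlgHom.toRingHom_eq_coe, RingHom.coe_coe]
      rw [map_intCast]
      exact hzm
    have hc : c = (m : 𝓞 K) := NumberField.RingOfIntegers.ext hcK
    rcases hm5 with rfl | rfl | rfl | rfl | rfl
    · left; simpa using hc
    · right; left; simpa using hc
    · right; right; left; simpa using hc
    · right; right; right; left; simpa using hc
    · right; right; right; right; simpa using hc
end

section
/- Let c be an algebraic integer in an imaginary quadratic field with Re(c) ≥ 0, c ≠ 0, ±2. Then |c/(c+2)| ≤ 1, and if additionally c ∉ S_c (in particular |c| ≥ √2 and c ≠ 1, 2), then |c/(c−2)| ≤ 5. -/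
open NumberField Complex

/-- The exceptional set `S_c` of the paper, viewed inside `ℂ`. -/
def Sc : Set ℂ :=
  {1, -1, I, -I,
   1 + I, 1 - I, -1 + I, -1 - I,
   2 + I, 2 - I, -2 + I, -2 - I,
   1 + (Real.sqrt 2 : ℂ) * I, 1 - (Real.sqrt 2 : ℂ) * I,
   -1 + (Real.sqrt 2 : ℂ) * I, -1 - (Real.sqrt 2 : ℂ) * I,
   1 + (Real.sqrt 3 : ℂ) * I, 1 - (Real.sqrt 3 : ℂ) * I,
   -1 + (Real.sqrt 3 : ℂ) * I, -1 - (Real.sqrt 3 : ℂ) * I,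
   (1 + (Real.sqrt 3 : ℂ) * I) / 2, (1 - (Real.sqrt 3 : ℂ) * I) / 2,
   (-1 + (Real.sqrt 3 : ℂ) * I) / 2, (-1 - (Real.sqrt 3 : ℂ) * I) / 2,
   (3 + (Real.sqrt 3 : ℂ) * I) / 2, (3 - (Real.sqrt 3 : ℂ) * I) / 2,
   (-3 + (Real.sqrt 3 : ℂ) * I) / 2, (-3 - (Real.sqrt 3 : ℂ) * I) / 2}

/-- For an algebraic integer `c` of an imaginary quadratic field with `Re(c) ≥ 0` and
`c ∉ {0, ±2}`, one has `|c/(c+2)| ≤ 1`; and if moreover `c ∉ S_c`, then `|c/(c−2)| ≤ 5`. -/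
theorem stmt_15 (K : Type*) [Field K] [NumberField K]
    (hdeg : Module.finrank ℚ K = 2) (himag : IsEmpty (K →+* ℝ))
    (f : K →+* ℂ) (c : 𝓞 K)
    (hre : 0 ≤ (f (c : K)).re) (hc0 : c ≠ 0) (hc2 : c ≠ 2) (hc2' : c ≠ -2) :
    ‖f (c : K) / (f (c : K) + 2)‖ ≤ 1 ∧
      (f (c : K) ∉ Sc → ‖f (c : K) / (f (c : K) - 2)‖ ≤ 5) := by
  set z := f (c : K) with hzdef
  set x := z.re with hx
  set y := z.im with hy
  -- basic nonvanishing
  have hcoe : Function.Injective (algebraMap (𝓞 K) K) := RingOfIntegers.coe_injective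
  have hz0 : z ≠ 0 := by
    simp only [hzdef, ne_eq, map_eq_zero]
    exact fun h => hc0 (hcoe (by simpa using h))
  have h2K : f ((algebraMap (𝓞 K) K) (2 : 𝓞 K)) = 2 := by rw [map_ofNat, map_ofNat]
  have hm2K : f ((algebraMap (𝓞 K) K) (-2 : 𝓞 K)) = -2 := by rw [map_neg, map_neg, map_ofNat, map_ofNat]
  have hz2 : z ≠ 2 := fun h => hc2 (hcoe (f.injective (by rw [h2K]; exact h)))
  have hzm2 : z ≠ -2 := fun h => hc2' (hcoe (f.injective (by rw [hm2K]; exact h)))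
  classical
  -- the two embeddings
  let F : K →ₐ[ℚ] ℂ := f.toRatAlgHom
  let G : K →ₐ[ℚ] ℂ := ((starRingEnd ℂ).comp f).toRatAlgHom
  have hFG : F ≠ G := by
    intro h
    have hreal : NumberField.ComplexEmbedding.IsReal f := by
      rw [NumberField.ComplexEmbedding.isReal_iff]
      ext w
      have := DFunLike.congr_fun h w
      exact this.symm
    exact himag.elim hreal.embedding
  have hcard : Fintype.card (K →ₐ[ℚ] ℂ) = 2 := by
    rw [AlgHom.card, hdeg]
  have huniv : (Finset.univ : Finset (K →ₐ[ℚ] ℂ)) = {F, G} := by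
    symm
    apply Finset.eq_univ_of_card
    rw [Finset.card_pair hFG, hcard]
  -- trace and norm
  obtain ⟨t, ht⟩ := IsIntegrallyClosed.isIntegral_iff.mp
    (Algebra.isIntegral_trace (R := ℤ) (L := ℚ) (RingOfIntegers.isIntegral_coe c))
  obtain ⟨n, hn⟩ := IsIntegrallyClosed.isIntegral_iff.mp
    (Algebra.isIntegral_norm ℚ (L := K) (R := ℤ) (RingOfIntegers.isIntegral_coe c))
  simp only [algebraMap_int_eq, eq_intCast] at ht hn
  have htr : ((t : ℚ) : ℂ) = z + (starRingEnd ℂ) z := by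
    rw [ht]
    have := trace_eq_sum_embeddings (E := ℂ) (K := ℚ) (L := K) (x := (c : K))
    rw [show (algebraMap ℚ ℂ) (Algebra.trace ℚ K (c:K)) = ((Algebra.trace ℚ K (c:K) : ℚ) : ℂ) from rfl] at this
    rw [this, huniv, Finset.sum_pair hFG]
    rfl
  have hnm : ((n : ℚ) : ℂ) = z * (starRingEnd ℂ) z := by
    rw [hn]
    have := Algebra.norm_eq_prod_embeddings (E := ℂ) (K := ℚ) (L := K) ((c : K))
    rw [show (algebraMap ℚ ℂ) (Algebra.norm ℚ (c:K)) = ((Algebra.norm ℚ (c:K) : ℚ) : ℂ) from rfl] at this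
    rw [this, huniv, Finset.prod_pair hFG]
    rfl
  rw [Complex.add_conj] at htr
  rw [Complex.mul_conj] at hnm
  have ht2 : (t : ℝ) = 2 * x := by
    have : ((t : ℝ) : ℂ) = ((2 * x : ℝ) : ℂ) := by push_cast at htr ⊢; exact htr
    exact_mod_cast this
  have hn2 : (n : ℝ) = x ^ 2 + y ^ 2 := by
    have : ((n : ℝ) : ℂ) = ((Complex.normSq z : ℝ) : ℂ) := by push_cast at hnm ⊢; exact hnm
    have h2 := Complex.ofReal_inj.mp this
    rw [h2, Complex.normSq_apply]; ring
  -- integer inequalities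
  have htnn : 0 ≤ t := by
    have : (0 : ℝ) ≤ (t : ℝ) := by rw [ht2]; linarith
    exact_mod_cast this
  have hn1 : 1 ≤ n := by
    have hpos : (0 : ℝ) < (n : ℝ) := by
      rw [hn2]
      have := Complex.normSq_pos.mpr hz0
      rw [Complex.normSq_apply] at this
      nlinarith
    have : 0 < n := by exact_mod_cast hpos
    omega
  have htn : t ^ 2 ≤ 4 * n := by
    have : ((t : ℝ)) ^ 2 ≤ 4 * (n : ℝ) := by rw [ht2, hn2]; nlinarith [sq_nonneg y]
    exact_mod_cast this
  have hexc : ¬(t = 4 ∧ n = 4) := by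
    rintro ⟨rfl, rfl⟩
    apply hz2
    have hx2 : x = 2 := by
      have : (4 : ℝ) = 2 * x := by exact_mod_cast ht2
      linarith
    have hy0 : y = 0 := by
      have : (4 : ℝ) = x ^ 2 + y ^ 2 := by exact_mod_cast hn2
      nlinarith
    apply Complex.ext <;> simp [← hx, ← hy, hx2, hy0]
  have key : 0 ≤ 24 * n - 50 * t + 100 := by
    rcases le_or_gt t 3 with h | h
    · nlinarith
    · rcases eq_or_lt_of_le (by omega : 4 ≤ t) with h4 | h5
      · have hn5 : 5 ≤ n := by
          rcases eq_or_lt_of_le (show 4 ≤ n by nlinarith) with h' | h'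
          · exact absurd ⟨h4.symm, h'.symm⟩ hexc
          · omega
        omega
      · nlinarith
  -- abs computations
  have e0 : (‖z‖) ^ 2 = x ^ 2 + y ^ 2 := by
    rw [Complex.sq_norm, Complex.normSq_apply]; ring
  constructor
  · have hzp2 : z + 2 ≠ 0 := fun h => hzm2 (by linear_combination h)
    rw [norm_div, div_le_one (norm_pos_iff.mpr hzp2)]
    have e1 : (‖z + 2‖) ^ 2 = (x + 2) ^ 2 + y ^ 2 := by
      rw [Complex.sq_norm, Complex.normSq_apply]
      simp [← hx, ← hy]
      ring
    nlinarith [norm_nonneg z, norm_nonneg (z + 2)]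
  · intro _
    have hzm : z - 2 ≠ 0 := fun h => hz2 (by linear_combination h)
    rw [norm_div, div_le_iff₀ (norm_pos_iff.mpr hzm)]
    have e2 : (‖z - 2‖) ^ 2 = (x - 2) ^ 2 + y ^ 2 := by
      rw [Complex.sq_norm, Complex.normSq_apply]
      simp [← hx, ← hy]
      ring
    have hr1 : (‖z‖) ^ 2 = (n : ℝ) := by rw [e0, hn2]
    have hr2 : 25 * (‖z - 2‖) ^ 2 = 25 * ((n : ℝ) - 2 * t + 4) := by
      rw [e2, hn2, ht2]; ring
    have hkey : (0 : ℝ) ≤ 24 * (n : ℝ) - 50 * (t : ℝ) + 100 := by exact_mod_cast key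
    nlinarith [norm_nonneg z, norm_nonneg (z - 2)]
end
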